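/- For i ≥ 1 and j ≥ i + 2, the conditional probability Prob(F_j ∈ A(p) | F_i ∈ A(p)) equals Prob(F_{j-i-1} ∈ A(p)), i.e., the process restarts after a selected element and a forced gap. -/

import Mathlib

open Finset

noncomputable section

def Fib (n : ℕ) : ℕ := Nat.fib (n + 1)

/-- `included c k` : whether `F_{k+1}` is included in the random Zeckendorf process,
given coins `c` (`c k` is the coin for step `k+1`): a Fibonacci number is included
with probability `p` when the previous one was not included, and is excluded otherwise. -/
def included (c : ℕ → Bool) : ℕ → Bool
  | 0 => c 0
  | k + 1 => !included c k && c (k + 1)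

/-- Extend a finite coin sequence by `false`. -/
def ext (n : ℕ) (c : Fin n → Bool) : ℕ → Bool :=
  fun j => if h : j < n then c ⟨j, h⟩ else false

/-- Probability weight of a finite coin sequence, each coin heads with probability `p`. -/
def wt (p : ℝ) {n : ℕ} (c : Fin n → Bool) : ℝ :=
  ∏ i, if c i then p else 1 - p

open Classical in
/-- Probability of an event depending on the first `n` coins. -/
def finProb (p : ℝ) (n : ℕ) (E : (ℕ → Bool) → Prop) : ℝ :=
  ∑ c : Fin n → Bool, if E (ext n c) then wt p c else 0

/-- `Prob (F_k ∈ A(p))` for `k ≥ 1`. -/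
def probIncl (p : ℝ) (k : ℕ) : ℝ :=
  finProb p k (fun c => included c (k - 1) = true)

/-- Expected value of a function of the first `n` coins. -/
def expVal (p : ℝ) (n : ℕ) (f : (ℕ → Bool) → ℝ) : ℝ :=
  ∑ c : Fin n → Bool, wt p c * f (ext n c)

/-- `W_n` : the number of selected indices among `1,...,n`. -/
def countIn (n : ℕ) (c : ℕ → Bool) : ℕ :=
  ((Icc 1 n).filter (fun j => included c (j - 1) = true)).card

-- aux lemmas to be inserted above the theorem

lemma included_congr {c c' : ℕ → Bool} : ∀ m : ℕ, (∀ t ≤ m, c t = c' t) →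
    included c m = included c' m := by
  intro m
  induction m with
  | zero => intro h; simp [included, h 0 le_rfl]
  | succ n ih =>
      intro h
      simp only [included]
      rw [ih (fun t ht => h t (ht.trans (Nat.le_succ n))), h (n+1) le_rfl]

lemma wt_pos {p : ℝ} (hp0 : 0 < p) (hp1 : p < 1) {n : ℕ} (c : Fin n → Bool) :
    0 < wt p c := by
  apply Finset.prod_pos
  intro t _
  split <;> linarith

lemma included_onehot (m : ℕ) : ∀ s ≤ m,
    included (fun t => decide (t = m)) s = decide (s = m) := by
  intro s
  induction s with
  | zero => intro _; simp [included]
  | succ n ih =>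
      intro h
      have hn : n ≤ m := by omega
      have hnm : n ≠ m := by omega
      simp only [included, ih hn]
      simp [hnm]

lemma probIncl_pos {p : ℝ} (hp0 : 0 < p) (hp1 : p < 1) {i : ℕ} (hi : 1 ≤ i) :
    0 < probIncl p i := by
  classical
  unfold probIncl finProb
  apply Finset.sum_pos'
  · intro c _
    split
    · exact (wt_pos hp0 hp1 c).le
    · exact le_rfl
  · refine ⟨fun t => decide ((t : ℕ) = i - 1), Finset.mem_univ _, ?_⟩
    have hext : _root_.ext i (fun t => decide ((t : ℕ) = i - 1))
        = fun t => decide (t = i - 1) := by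
      funext t
      unfold _root_.ext
      split
      · rfl
      · next h => simp; omega
    have hinc : included (_root_.ext i fun t => decide ((t : ℕ) = i - 1)) (i - 1) = true := by
      rw [hext, included_onehot (i-1) (i-1) le_rfl]; simp
    split
    · exact wt_pos hp0 hp1 _
    · next hfalse => exact absurd hinc hfalse

lemma restart_shift (c : ℕ → Bool) (i : ℕ) (hi : 1 ≤ i)
    (h : included c (i - 1) = true) :
    ∀ m : ℕ, included c (i + 1 + m) = included (fun t => c (i + 1 + t)) m := by
  have hzero : included c i = false := by
    have hi' : i = (i - 1) + 1 := by omega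
    rw [hi']
    simp [included, h]
  intro m
  induction m with
  | zero =>
      show included c (i + 1) = included (fun t => c (i + 1 + t)) 0
      simp [included, hzero]
  | succ n ih =>
      show included c ((i + 1 + n) + 1) = included (fun t => c (i + 1 + t)) (n + 1)
      simp only [included, ih]
      rfl

def glue (i k : ℕ) (x : (Fin i → Bool) × Bool × (Fin k → Bool)) : Fin (i + 1 + k) → Bool :=
  fun t => if h : (t : ℕ) < i then x.1 ⟨t, h⟩
    else if h2 : (t : ℕ) < i + 1 then x.2.1
    else x.2.2 ⟨(t : ℕ) - (i + 1), by have := t.isLt; omega⟩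

lemma glue_eval₁ {i k : ℕ} (x : (Fin i → Bool) × Bool × (Fin k → Bool))
    (t : Fin (i + 1 + k)) (h : (t : ℕ) < i) : glue i k x t = x.1 ⟨t, h⟩ := by
  unfold glue; rw [dif_pos h]

lemma glue_eval₂ {i k : ℕ} (x : (Fin i → Bool) × Bool × (Fin k → Bool))
    (t : Fin (i + 1 + k)) (h1 : ¬ (t : ℕ) < i) (h2 : (t : ℕ) < i + 1) :
    glue i k x t = x.2.1 := by
  unfold glue; rw [dif_neg h1, dif_pos h2]

lemma glue_eval₃ {i k : ℕ} (x : (Fin i → Bool) × Bool × (Fin k → Bool))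
    (t : Fin (i + 1 + k)) (h1 : ¬ (t : ℕ) < i + 1) :
    glue i k x t = x.2.2 ⟨(t : ℕ) - (i + 1), by have := t.isLt; omega⟩ := by
  unfold glue; rw [dif_neg (by omega), dif_neg h1]

lemma glue_bijective (i k : ℕ) : Function.Bijective (glue i k) := by
  rw [Function.bijective_iff_has_inverse]
  refine ⟨fun c => (fun t => c ⟨t, by omega⟩, c ⟨i, by omega⟩, fun t => c ⟨i + 1 + t, by omega⟩),
    ?_, ?_⟩
  · rintro ⟨a, b, d⟩
    refine Prod.ext ?_ (Prod.ext ?_ ?_) <;> dsimp only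
    · funext t
      rw [glue_eval₁ (a, b, d) ⟨(t : ℕ), by omega⟩ t.isLt]
    · rw [glue_eval₂ (a, b, d) ⟨i, by omega⟩ (by simp) (by simp)]
    · funext t
      rw [glue_eval₃ (a, b, d) ⟨i + 1 + (t : ℕ), by omega⟩ (by simp; omega)]
      exact congrArg d (by apply Fin.ext; simp)
  · intro c
    funext t
    by_cases h1 : (t : ℕ) < i
    · rw [glue_eval₁ _ _ h1]
    · by_cases h2 : (t : ℕ) < i + 1
      · rw [glue_eval₂ _ _ h1 h2]
        dsimp only
        exact congrArg c (by apply Fin.ext; simp; omega)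
      · rw [glue_eval₃ _ _ h2]
        dsimp only
        exact congrArg c (by apply Fin.ext; simp; omega)

lemma wt_glue (p : ℝ) {i k : ℕ} (a : Fin i → Bool) (b : Bool) (d : Fin k → Bool) :
    wt p (glue i k (a, b, d)) = wt p a * (if b then p else 1 - p) * wt p d := by
  unfold wt
  rw [Fin.prod_univ_add (f := fun t : Fin (i + 1 + k) =>
    if glue i k (a, b, d) t then p else 1 - p)]
  rw [Fin.prod_univ_castSucc (f := fun t : Fin (i + 1) =>
    if glue i k (a, b, d) (Fin.castAdd k t) then p else 1 - p)]
  have h1 : ∀ t : Fin i, glue i k (a, b, d) (Fin.castAdd k t.castSucc) = a t := by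
    intro t
    rw [glue_eval₁ (a, b, d) _ (by simp [t.2])]
    exact congrArg a (by apply Fin.ext; simp)
  have h2 : glue i k (a, b, d) (Fin.castAdd k (Fin.last i)) = b := by
    rw [glue_eval₂ (a, b, d) _ (by simp) (by simp)]
  have h3 : ∀ t : Fin k, glue i k (a, b, d) (Fin.natAdd (i + 1) t) = d t := by
    intro t
    rw [glue_eval₃ (a, b, d) _ (by simp; omega)]
    exact congrArg d (by apply Fin.ext; simp)
  simp only [h1, h2, h3]

lemma ext_glue_lt {i k : ℕ} (a : Fin i → Bool) (b : Bool) (d : Fin k → Bool)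
    {t : ℕ} (ht : t < i) :
    _root_.ext (i + 1 + k) (glue i k (a, b, d)) t = _root_.ext i a t := by
  unfold _root_.ext
  rw [dif_pos (by omega), dif_pos ht]
  rw [glue_eval₁ (a, b, d) _ (by simpa using ht)]

lemma ext_glue_shift {i k : ℕ} (a : Fin i → Bool) (b : Bool) (d : Fin k → Bool)
    {t : ℕ} (ht : t < k) :
    _root_.ext (i + 1 + k) (glue i k (a, b, d)) (i + 1 + t) = _root_.ext k d t := by
  unfold _root_.ext
  rw [dif_pos (by omega), dif_pos ht]
  rw [glue_eval₃ (a, b, d) _ (by simp; omega)]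
  exact congrArg d (by apply Fin.ext; simp)

lemma key_factor (p : ℝ) (i k : ℕ) (hi : 1 ≤ i) (hk : 1 ≤ k) :
    finProb p (i + 1 + k)
      (fun c => included c (i - 1) = true ∧ included c (i + 1 + k - 1) = true)
      = probIncl p i * probIncl p k := by
  classical
  unfold finProb
  rw [← Fintype.sum_bijective (glue i k) (glue_bijective i k) _ _ (fun x => rfl)]
  beta_reduce
  have hcond : ∀ x : (Fin i → Bool) × Bool × (Fin k → Bool),
      (included (_root_.ext (i + 1 + k) (glue i k x)) (i - 1) = true ∧
        included (_root_.ext (i + 1 + k) (glue i k x)) (i + 1 + k - 1) = true)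
      ↔ (included (_root_.ext i x.1) (i - 1) = true ∧
          included (_root_.ext k x.2.2) (k - 1) = true) := by
    rintro ⟨a, b, d⟩
    have hleft : included (_root_.ext (i + 1 + k) (glue i k (a, b, d))) (i - 1)
        = included (_root_.ext i a) (i - 1) := by
      apply included_congr
      intro t ht
      exact ext_glue_lt a b d (by omega)
    have hidx : i + 1 + k - 1 = i + 1 + (k - 1) := by omega
    have hright : ∀ h1 : included (_root_.ext (i + 1 + k) (glue i k (a, b, d))) (i - 1) = true,
        included (_root_.ext (i + 1 + k) (glue i k (a, b, d))) (i + 1 + k - 1)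
        = included (_root_.ext k d) (k - 1) := by
      intro h1
      rw [hidx, restart_shift _ i hi h1 (k - 1)]
      apply included_congr
      intro t ht
      exact ext_glue_shift a b d (by omega)
    constructor
    · rintro ⟨h1, h2⟩
      exact ⟨hleft ▸ h1, (hright h1) ▸ h2⟩
    · rintro ⟨h1, h2⟩
      have h1' : included (_root_.ext (i + 1 + k) (glue i k (a, b, d))) (i - 1) = true := by
        rw [hleft]; exact h1
      refine ⟨h1', ?_⟩
      rw [hright h1']
      exact h2
  trans (∑ x : (Fin i → Bool) × Bool × (Fin k → Bool),
        (if included (_root_.ext i x.1) (i - 1) = true then wt p x.1 else 0) *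
        ((if x.2.1 then p else 1 - p) *
          (if included (_root_.ext k x.2.2) (k - 1) = true then wt p x.2.2 else 0)))
  · apply Finset.sum_congr rfl
    intro x _
    obtain ⟨a, b, d⟩ := x
    simp only [hcond (a, b, d), wt_glue]
    by_cases h1 : included (_root_.ext i a) (i - 1) = true <;>
      by_cases h2 : included (_root_.ext k d) (k - 1) = true <;>
      simp [h1, h2] <;> ring
  rw [Fintype.sum_prod_type]
  simp only [Fintype.sum_prod_type]
  simp only [← Finset.mul_sum, ← Finset.sum_mul]
  have hPi : probIncl p i
      = ∑ a : Fin i → Bool, (if included (_root_.ext i a) (i - 1) = true then wt p a else 0) := by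
    unfold probIncl finProb
    exact Finset.sum_congr rfl (fun a _ => by congr)
  have hPk : probIncl p k
      = ∑ d : Fin k → Bool, (if included (_root_.ext k d) (k - 1) = true then wt p d else 0) := by
    unfold probIncl finProb
    exact Finset.sum_congr rfl (fun d _ => by congr)
  rw [hPi, hPk]
  have hbool : (∑ b : Bool, ∑ d2 : Fin k → Bool,
      (if b then p else 1 - p) *
        (if included (_root_.ext k d2) (k - 1) = true then wt p d2 else 0))
      = ∑ d2 : Fin k → Bool,
        (if included (_root_.ext k d2) (k - 1) = true then wt p d2 else 0) := by
    rw [Fintype.sum_bool, ← Finset.sum_add_distrib]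
    apply Finset.sum_congr rfl
    intro d2 _
    simp only [if_true, Bool.false_eq_true, if_false]
    ring
  simp only [hbool]
  rw [← Finset.sum_mul]

/-- For `i ≥ 1` and `j ≥ i + 2`, the conditional probability
`Prob(F_j ∈ A(p) | F_i ∈ A(p))` equals `Prob(F_{j-i-1} ∈ A(p))`: the process restarts
after a selected element and a forced gap. -/
theorem conditional_prob_restart (p : ℝ) (hp0 : 0 < p) (hp1 : p < 1)
    (i j : ℕ) (hi : 1 ≤ i) (hj : i + 2 ≤ j) :
    finProb p j (fun c => included c (i - 1) = true ∧ included c (j - 1) = true)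
        / probIncl p i
      = probIncl p (j - i - 1) := by
  obtain ⟨k, hk1, hk2⟩ : ∃ k, 1 ≤ k ∧ j = i + 1 + k := ⟨j - i - 1, by omega, by omega⟩
  subst hk2
  have hidx : i + 1 + k - i - 1 = k := by omega
  rw [hidx, key_factor p i k hi hk1,
    mul_div_cancel_left₀ _ (ne_of_gt (probIncl_pos hp0 hp1 hi))]

end
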